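/- Let s ≥ 0 be a real number and (k_n) a sequence of natural numbers with k_n ≤ n. Suppose there exists δ > 0 such that for all sufficiently large n, s ≥ (1/n)·log₂(#F(n, k_n)) + δ. Then the probability that the random 1-CARD-XOR formula ψ(n, k_n, ⌈s·n⌉) is unsatisfiable tends to 1 as n → ∞. -/
import Mathlib


open Finset Filter
open scoped Classical

/-- Probability of event `P` over a uniformly random pair `(A, b)` with `A` an
`m × n` matrix over `ZMod 2` and `b : Fin m → ZMod 2`. -/
noncomputable def xorProb (n m : ℕ)
    (P : Matrix (Fin m) (Fin n) (ZMod 2) × (Fin m → ZMod 2) → Prop) : ℝ :=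
  (Finset.univ.filter P).card /
    Fintype.card (Matrix (Fin m) (Fin n) (ZMod 2) × (Fin m → ZMod 2))

/-- The random 1-CARD-XOR formula `ψ(n,k,m)` is satisfied by the pair `(A, b)`:
there is an assignment of Hamming weight at most `k` solving `A ⬝ x = b`. -/
def cardXorSat (n k m : ℕ)
    (ab : Matrix (Fin m) (Fin n) (ZMod 2) × (Fin m → ZMod 2)) : Prop :=
  ∃ x : Fin n → ZMod 2, hammingNorm x ≤ k ∧ ab.1.mulVec x = ab.2

/-- Probability that `ψ(n,k,m)` is satisfiable. -/
noncomputable def satProb (n k m : ℕ) : ℝ := xorProb n m (cardXorSat n k m)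

/-- Probability that `ψ(n,k,m)` is unsatisfiable. -/
noncomputable def unsatProb (n k m : ℕ) : ℝ := xorProb n m fun ab => ¬ cardXorSat n k m ab

/-- `#F(n,k) = ∑_{w=0}^{k} C(n,w)`, the number of solutions of the at-most-`k`
cardinality constraint on `n` variables. -/
def cardSum (n k : ℕ) : ℕ := ∑ w ∈ Finset.range (k + 1), n.choose w

/-- The binary entropy function (with `H 0 = H 1 = 0` by `logb` junk values). -/
noncomputable def binEnt (μ : ℝ) : ℝ :=
  -μ * Real.logb 2 μ - (1 - μ) * Real.logb 2 (1 - μ)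

lemma zmod2_ne_zero : ∀ a : ZMod 2, a ≠ 0 ↔ a = 1 := by decide

lemma count_weight_le (n K : ℕ) :
    ((univ : Finset (Fin n → ZMod 2)).filter (fun x => hammingNorm x ≤ K)).card
      = cardSum n K := by
  have hcard : ∀ x : Fin n → ZMod 2,
      hammingNorm x = (univ.filter (fun i => x i = 1)).card := by
    intro x
    unfold hammingNorm
    congr 1
    apply Finset.filter_congr
    intro i _
    simp [zmod2_ne_zero]
  have : ((univ : Finset (Fin n → ZMod 2)).filter (fun x => hammingNorm x ≤ K)).card
      = ((univ : Finset (Finset (Fin n))).filter (fun t => t.card ≤ K)).card := by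
    apply Finset.card_bij (fun x _ => univ.filter (fun i => x i = 1))
    · intro x hx
      simp only [mem_filter, mem_univ, true_and] at hx ⊢
      rw [← hcard]; exact hx
    · intro x hx y hy hxy
      funext i
      have : (i ∈ univ.filter (fun j => x j = 1)) = (i ∈ univ.filter (fun j => y j = 1)) := by
        rw [hxy]
      simp only [mem_filter, mem_univ, true_and, eq_iff_iff] at this
      have hx1 := zmod2_ne_zero (x i)
      have hy1 := zmod2_ne_zero (y i)
      by_cases h : x i = 1
      · rw [h, this.mp h]
      · have hx0 : x i = 0 := by
          by_contra h0; exact h (hx1.mp h0)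
        have hy0 : y i = 0 := by
          by_contra h0
          exact h (this.mpr (hy1.mp h0))
        rw [hx0, hy0]
    · intro t ht
      refine ⟨fun i => if i ∈ t then 1 else 0, ?_, ?_⟩
      · simp only [mem_filter, mem_univ, true_and] at ht ⊢
        rw [hcard]
        have : (univ.filter (fun i => (if i ∈ t then (1:ZMod 2) else 0) = 1)) = t := by
          ext i; simp only [mem_filter, mem_univ, true_and]
          split <;> simp_all
        rw [this]; exact ht
      · ext i; simp only [mem_filter, mem_univ, true_and]
        split <;> simp_all
  rw [this]
  have hsplit : ((univ : Finset (Finset (Fin n))).filter (fun t => t.card ≤ K))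
      = (Finset.range (K+1)).biUnion (fun w => Finset.powersetCard w univ) := by
    ext t
    simp [Finset.mem_powersetCard, Nat.lt_succ_iff]
  rw [hsplit, Finset.card_biUnion]
  · unfold cardSum
    apply Finset.sum_congr rfl
    intro w _
    rw [Finset.card_powersetCard, card_univ, Fintype.card_fin]
  · intro a _ b _ hab
    apply Finset.disjoint_left.mpr
    intro t ht ht'
    rw [Finset.mem_powersetCard] at ht ht'
    exact hab (ht.2.symm.trans ht'.2)


lemma sat_card_le (n k m : ℕ) :
    ((univ : Finset (Matrix (Fin m) (Fin n) (ZMod 2) × (Fin m → ZMod 2))).filter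
        (cardXorSat n k m)).card
      ≤ Fintype.card (Matrix (Fin m) (Fin n) (ZMod 2)) * cardSum n k := by
  classical
  set S : Finset (Matrix (Fin m) (Fin n) (ZMod 2) × (Fin n → ZMod 2)) :=
    (univ : Finset (Matrix (Fin m) (Fin n) (ZMod 2))) ×ˢ
      ((univ : Finset (Fin n → ZMod 2)).filter (fun x => hammingNorm x ≤ k)) with hS
  have hsub : ((univ : Finset (Matrix (Fin m) (Fin n) (ZMod 2) × (Fin m → ZMod 2))).filter
      (cardXorSat n k m)) ⊆ S.image (fun p => (p.1, p.1.mulVec p.2)) := by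
    intro ab hab
    simp only [mem_filter, mem_univ, true_and] at hab
    obtain ⟨x, hx, hAx⟩ := hab
    apply Finset.mem_image.mpr
    exact ⟨(ab.1, x), by simp [hS, hx], by simp [hAx]⟩
  calc _ ≤ (S.image (fun p => (p.1, p.1.mulVec p.2))).card := Finset.card_le_card hsub
    _ ≤ S.card := Finset.card_image_le
    _ = Fintype.card (Matrix (Fin m) (Fin n) (ZMod 2)) * cardSum n k := by
        rw [hS, Finset.card_product, card_univ, count_weight_le]

lemma satProb_le (n k m : ℕ) :
    xorProb n m (cardXorSat n k m) ≤ (cardSum n k : ℝ) / 2 ^ m := by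
  unfold xorProb
  have hM : (0:ℝ) < (Fintype.card (Matrix (Fin m) (Fin n) (ZMod 2)) : ℝ) := by
    exact_mod_cast Fintype.card_pos
  have hcard : (Fintype.card (Matrix (Fin m) (Fin n) (ZMod 2) × (Fin m → ZMod 2)) : ℝ)
      = (Fintype.card (Matrix (Fin m) (Fin n) (ZMod 2)) : ℝ) * 2 ^ m := by
    rw [Fintype.card_prod]
    push_cast
    congr 1
    rw [Fintype.card_fun]
    simp [ZMod.card]
  rw [hcard]
  rw [div_le_div_iff₀ (by positivity) (by positivity)]
  calc ((univ.filter (cardXorSat n k m)).card : ℝ) * 2 ^ m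
      ≤ ((Fintype.card (Matrix (Fin m) (Fin n) (ZMod 2)) * cardSum n k : ℕ) : ℝ) * 2 ^ m := by
        gcongr
        exact_mod_cast sat_card_le n k m
    _ = (cardSum n k : ℝ) * ((Fintype.card (Matrix (Fin m) (Fin n) (ZMod 2)) : ℝ) * 2 ^ m) := by
        push_cast; ring

lemma unsat_eq (n k m : ℕ) :
    xorProb n m (fun ab => ¬ cardXorSat n k m ab)
      = 1 - xorProb n m (cardXorSat n k m) := by
  unfold xorProb
  have hN : (0:ℝ) < (Fintype.card (Matrix (Fin m) (Fin n) (ZMod 2) × (Fin m → ZMod 2)) : ℝ) := by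
    exact_mod_cast Fintype.card_pos
  have hcompl : (@Finset.filter _ (fun ab => ¬ cardXorSat n k m ab)
        (fun ab => Classical.propDecidable _) univ)
      = (univ.filter (cardXorSat n k m))ᶜ := by
    ext ab; simp
  rw [hcompl, Finset.card_compl]
  rw [Nat.cast_sub ((Finset.card_filter_le _ _).trans (le_of_eq card_univ)), sub_div, div_self hN.ne']

theorem stmt3 (s : ℝ) (hs : 0 ≤ s) (k : ℕ → ℕ) (hk : ∀ n, k n ≤ n)
    (h : ∃ δ > (0 : ℝ), ∀ᶠ n : ℕ in atTop,
      (1 / n) * Real.logb 2 (cardSum n (k n)) + δ ≤ s) :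
    Tendsto (fun n : ℕ => unsatProb n (k n) ⌈s * n⌉₊) atTop (nhds 1) := by
  unfold unsatProb
  obtain ⟨δ, hδ, hev⟩ := h
  set r : ℝ := (2:ℝ) ^ (-δ) with hr
  have hr0 : 0 ≤ r := le_of_lt (Real.rpow_pos_of_pos two_pos _)
  have hr1 : r < 1 := Real.rpow_lt_one_of_one_lt_of_neg one_lt_two (by linarith)
  have hrt : Tendsto (fun n : ℕ => r ^ n) atTop (nhds 0) :=
    tendsto_pow_atTop_nhds_zero_of_lt_one hr0 hr1
  have hsat : Tendsto (fun n : ℕ => xorProb n ⌈s * n⌉₊ (cardXorSat n (k n) ⌈s * n⌉₊))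
      atTop (nhds 0) := by
    apply squeeze_zero' ?_ ?_ hrt
    · filter_upwards with n
      unfold xorProb
      positivity
    · filter_upwards [hev, eventually_ge_atTop 1] with n hn hn1
      have hnR : (1:ℝ) ≤ (n:ℝ) := by exact_mod_cast hn1
      have hF1 : (1:ℝ) ≤ (cardSum n (k n) : ℝ) := by
        have : 1 ≤ cardSum n (k n) := by
          unfold cardSum
          calc 1 = n.choose 0 := (Nat.choose_zero_right n).symm
            _ ≤ _ := Finset.single_le_sum (f := fun w => n.choose w)
                (fun _ _ => Nat.zero_le _) (Finset.mem_range.mpr (Nat.succ_pos _))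
        exact_mod_cast this
      have hFpos : (0:ℝ) < (cardSum n (k n) : ℝ) := by linarith
      have hL : Real.logb 2 (cardSum n (k n)) ≤ (s - δ) * n := by
        have h1 : (1 / (n:ℝ)) * Real.logb 2 (cardSum n (k n)) ≤ s - δ := by linarith
        have hnpos : (0:ℝ) < n := by linarith
        calc Real.logb 2 (cardSum n (k n))
            = (n:ℝ) * ((1 / (n:ℝ)) * Real.logb 2 (cardSum n (k n))) := by
              field_simp
          _ ≤ (n:ℝ) * (s - δ) := by
              apply mul_le_mul_of_nonneg_left h1 (le_of_lt hnpos)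
          _ = (s - δ) * n := by ring
      have hF : (cardSum n (k n) : ℝ) ≤ (2:ℝ) ^ ((s - δ) * n) := by
        calc (cardSum n (k n) : ℝ) = (2:ℝ) ^ Real.logb 2 (cardSum n (k n)) :=
              (Real.rpow_logb two_pos (by norm_num) hFpos).symm
          _ ≤ (2:ℝ) ^ ((s - δ) * n) := by
              exact Real.rpow_le_rpow_of_exponent_le one_le_two hL
      have hm : (2:ℝ) ^ (s * n) ≤ (2:ℝ) ^ (⌈s * n⌉₊ : ℕ) := by
        rw [← Real.rpow_natCast]
        exact Real.rpow_le_rpow_of_exponent_le one_le_two (Nat.le_ceil _)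
      calc xorProb n ⌈s * n⌉₊ (cardXorSat n (k n) ⌈s * n⌉₊)
          ≤ (cardSum n (k n) : ℝ) / 2 ^ (⌈s * n⌉₊ : ℕ) := satProb_le _ _ _
        _ ≤ (2:ℝ) ^ ((s - δ) * n) / (2:ℝ) ^ (s * n) := by
            apply div_le_div₀ (by positivity) hF (by positivity) hm
        _ = (2:ℝ) ^ ((s - δ) * n - s * n) := by
            rw [← Real.rpow_sub two_pos]
        _ = r ^ n := by
            rw [hr, ← Real.rpow_natCast ((2:ℝ) ^ (-δ)) n, ← Real.rpow_mul (by norm_num)]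
            ring_nf
  have := (tendsto_const_nhds (x := (1:ℝ)) (f := atTop)).sub hsat
  rw [sub_zero] at this
  apply this.congr
  intro n
  exact (unsat_eq n (k n) ⌈s * n⌉₊).symm
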